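/- For a linear pencil A, the convex cone C_A = {c + Σ_i u_i^* A u_i : c ≥ 0, u_i ∈ ℝ^α} is a closed subset of the finite-dimensional vector space ℝ[x]_1 of linear polynomials, provided the spectrahedron S_A has nonempty interior. -/

import Mathlib

open MvPolynomial Matrix
attribute [local instance] Matrix.frobeniusNormedAddCommGroup

noncomputable section

abbrev RP (n : ℕ) := MvPolynomial (Fin n) ℝ

/-- Evaluation of the linear pencil `A₀ + ∑ xᵢ Aᵢ` at a point `x ∈ ℝⁿ`. -/
def pencilEval {n α : ℕ} (A0 : Matrix (Fin α) (Fin α) ℝ) (A : Fin n → Matrix (Fin α) (Fin α) ℝ)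
    (x : Fin n → ℝ) : Matrix (Fin α) (Fin α) ℝ :=
  A0 + ∑ i, x i • A i

/-- The linear pencil `A₀ + ∑ xᵢ Aᵢ` as a matrix of polynomials. -/
def pencilPoly {n α : ℕ} (A0 : Matrix (Fin α) (Fin α) ℝ) (A : Fin n → Matrix (Fin α) (Fin α) ℝ) :
    Matrix (Fin α) (Fin α) (RP n) :=
  A0.map C + ∑ i, (X i : RP n) • (A i).map C

/-- `v^* M v` for a matrix of polynomials. -/
def quadForm {n α : ℕ} (M : Matrix (Fin α) (Fin α) (RP n)) (v : Fin α → RP n) : RP n :=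
  v ⬝ᵥ (M *ᵥ v)

/-- A sum of squares of polynomials. -/
def IsSos {n : ℕ} (p : RP n) : Prop := ∃ (k : ℕ) (q : Fin k → RP n), p = ∑ i, q i ^ 2

/-- An sos-matrix: a finite sum `∑ vⱼ vⱼ^*` with `vⱼ` vectors of polynomials. -/
def IsSosMatrix {n α : ℕ} (S : Matrix (Fin α) (Fin α) (RP n)) : Prop :=
  ∃ (k : ℕ) (v : Fin k → Fin α → RP n), S = ∑ j, Matrix.vecMulVec (v j) (v j)

/-- Membership in the quadratic module `M_A` associated to the pencil. -/
def InQuadModule {n α : ℕ} (A0 : Matrix (Fin α) (Fin α) ℝ)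
    (A : Fin n → Matrix (Fin α) (Fin α) ℝ) (p : RP n) : Prop :=
  ∃ s, IsSos s ∧ ∃ (k : ℕ) (v : Fin k → Fin α → RP n),
    p = s + ∑ j, quadForm (pencilPoly A0 A) (v j)

/-- Strong infeasibility: positive distance (Frobenius norm) between the range of the
pencil and the PSD cone. -/
def StronglyInfeasible {n α : ℕ} (A0 : Matrix (Fin α) (Fin α) ℝ)
    (A : Fin n → Matrix (Fin α) (Fin α) ℝ) : Prop :=
  ∃ ε > (0:ℝ), ∀ (x : Fin n → ℝ) (B : Matrix (Fin α) (Fin α) ℝ), B.PosSemidef →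
    ε ≤ dist (pencilEval A0 A x) B


private lemma quad_trace_aux {α : ℕ} (M : Matrix (Fin α) (Fin α) ℝ) (v : Fin α → ℝ) :
    v ⬝ᵥ (M *ᵥ v) = Matrix.trace (M * vecMulVec v v) := by
  simp only [Matrix.trace, Matrix.diag, Matrix.mul_apply, Matrix.vecMulVec_apply, dotProduct,
    Matrix.mulVec, Finset.mul_sum]
  congr 1; ext a; congr 1; ext b; ring

private lemma sum_quad_trace_aux {α k : ℕ} (M : Matrix (Fin α) (Fin α) ℝ)
    (v : Fin k → Fin α → ℝ) :
    ∑ i, v i ⬝ᵥ (M *ᵥ v i) = Matrix.trace (M * ∑ i, vecMulVec (v i) (v i)) := by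
  rw [Matrix.mul_sum, Matrix.trace_sum]
  exact Finset.sum_congr rfl fun i _ => quad_trace_aux M (v i)

private lemma trace_vecMulVec_aux {α : ℕ} (v : Fin α → ℝ) :
    Matrix.trace (vecMulVec v v) = v ⬝ᵥ v := by
  simp [Matrix.trace, Matrix.vecMulVec_apply, dotProduct, Matrix.diag]

private lemma vecMulVec_psd_aux {α : ℕ} (v : Fin α → ℝ) : (vecMulVec v v).PosSemidef := by
  refine Matrix.PosSemidef.of_dotProduct_mulVec_nonneg ?_ ?_
  · ext a b; simp [Matrix.vecMulVec_apply, Matrix.conjTranspose_apply, mul_comm]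
  · intro x
    have : star x ⬝ᵥ (vecMulVec v v *ᵥ x) = (v ⬝ᵥ x) * (v ⬝ᵥ x) := by
      simp only [star_trivial, dotProduct, Matrix.mulVec, Matrix.vecMulVec_apply,
        Finset.mul_sum, Finset.sum_mul]
      congr 1; ext a; congr 1; ext b; ring
    rw [this]; exact mul_self_nonneg _

open scoped MatrixOrder in
private lemma psd_decomp_aux {α : ℕ} (P : Matrix (Fin α) (Fin α) ℝ) (hP : P.PosSemidef) :
    ∃ v : Fin α → Fin α → ℝ, P = ∑ i, vecMulVec (v i) (v i) := by
  obtain ⟨B, hsym, hBB⟩ : ∃ B : Matrix (Fin α) (Fin α) ℝ, B.IsHermitian ∧ B * B = P :=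
    by
      obtain ⟨X, hX, -, h⟩ := CFC.exists_sqrt_of_isSelfAdjoint_of_quasispectrumRestricts
        hP.isHermitian (QuasispectrumRestricts.nnreal_of_nonneg hP.nonneg)
      exact ⟨X, hX, h⟩
  refine ⟨fun i => B i, ?_⟩
  ext a b
  rw [← hBB]
  simp only [Matrix.mul_apply, Matrix.sum_apply, Matrix.vecMulVec_apply]
  refine Finset.sum_congr rfl fun i _ => ?_
  have h2 : B a i = B i a := by
    conv_lhs => rw [← hsym]
    simp [Matrix.conjTranspose_apply]
  rw [h2]

private lemma quad_split_aux {α : ℕ} (M : Matrix (Fin α) (Fin α) ℝ) (hM : M.IsSymm)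
    (p w : Fin α → ℝ) (hw : M *ᵥ w = 0) :
    (p + w) ⬝ᵥ (M *ᵥ (p + w)) = p ⬝ᵥ (M *ᵥ p) := by
  have hvm : w ᵥ* M = 0 := by
    have := Matrix.mulVec_transpose M w
    rw [hM] at this
    rw [← this, hw]
  rw [Matrix.mulVec_add, dotProduct_add, add_dotProduct, add_dotProduct, hw]
  rw [Matrix.dotProduct_mulVec w M p, hvm]
  simp

private lemma sum_mulVec_aux {α m : ℕ} (M : Fin m → Matrix (Fin α) (Fin α) ℝ) (u : Fin α → ℝ) :
    (∑ i, M i) *ᵥ u = ∑ i, M i *ᵥ u := by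
  ext a
  simp only [Matrix.mulVec, dotProduct, Matrix.sum_apply, Finset.sum_apply, Finset.sum_mul]
  rw [Finset.sum_comm]

private lemma dot_sum_aux {α m : ℕ} (u : Fin α → ℝ) (f : Fin m → Fin α → ℝ) :
    u ⬝ᵥ (∑ i, f i) = ∑ i, u ⬝ᵥ f i := by
  simp only [dotProduct, Finset.sum_apply, Finset.mul_sum]
  rw [Finset.sum_comm]

private lemma quad_pencil_aux {n α : ℕ} (A0 : Matrix (Fin α) (Fin α) ℝ)
    (A : Fin n → Matrix (Fin α) (Fin α) ℝ) (x : Fin n → ℝ) (u : Fin α → ℝ) :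
    u ⬝ᵥ ((A0 + ∑ i, x i • A i) *ᵥ u) = u ⬝ᵥ (A0 *ᵥ u) + ∑ j, x j * (u ⬝ᵥ (A j *ᵥ u)) := by
  rw [Matrix.add_mulVec, dotProduct_add]
  congr 1
  rw [sum_mulVec_aux, dot_sum_aux]
  exact Finset.sum_congr rfl fun j _ => by
    rw [Matrix.smul_mulVec, dotProduct_smul, smul_eq_mul]

private lemma coercive_aux {α : ℕ} (M : Matrix (Fin α) (Fin α) ℝ) (U : Submodule ℝ (Fin α → ℝ))
    (hnn : ∀ p : Fin α → ℝ, 0 ≤ p ⬝ᵥ (M *ᵥ p))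
    (hker : ∀ p ∈ U, p ⬝ᵥ (M *ᵥ p) = 0 → p = 0) :
    ∃ lam > (0:ℝ), ∀ p ∈ U, lam * (p ⬝ᵥ p) ≤ p ⬝ᵥ (M *ᵥ p) := by
  classical
  have hfc : Continuous fun p : Fin α → ℝ => p ⬝ᵥ (M *ᵥ p) := by
    have : (fun p : Fin α → ℝ => p ⬝ᵥ (M *ᵥ p))
        = fun p : Fin α → ℝ => ∑ a, p a * ∑ b, M a b * p b := rfl
    rw [this]
    exact continuous_finset_sum _ fun a _ => (continuous_apply a).mul
      (continuous_finset_sum _ fun b _ => continuous_const.mul (continuous_apply b))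
  have hgc : Continuous fun p : Fin α → ℝ => p ⬝ᵥ p := by
    have : (fun p : Fin α → ℝ => p ⬝ᵥ p) = fun p : Fin α → ℝ => ∑ a, p a * p a := rfl
    rw [this]
    exact continuous_finset_sum _ fun a _ => (continuous_apply a).mul (continuous_apply a)
  have hdnn : ∀ p : Fin α → ℝ, 0 ≤ p ⬝ᵥ p := fun p =>
    Finset.sum_nonneg fun i _ => mul_self_nonneg _
  have hdpos : ∀ p : Fin α → ℝ, p ≠ 0 → 0 < p ⬝ᵥ p := by
    intro p hp
    refine lt_of_le_of_ne (hdnn p) fun h => hp ?_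
    exact dotProduct_self_eq_zero.mp h.symm
  set K : Set (Fin α → ℝ) := {p | p ∈ U ∧ p ⬝ᵥ p = 1} with hK
  have hKclosed : IsClosed K := by
    have h1 : IsClosed (U : Set (Fin α → ℝ)) := Submodule.closed_of_finiteDimensional U
    have h2 : IsClosed {p : Fin α → ℝ | p ⬝ᵥ p = 1} := isClosed_eq hgc continuous_const
    exact h1.inter h2
  have hKsub : K ⊆ Metric.closedBall 0 1 := by
    intro p hp
    rw [Metric.mem_closedBall, dist_zero_right]
    refine (pi_norm_le_iff_of_nonneg zero_le_one).mpr fun i => ?_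
    rw [Real.norm_eq_abs, abs_le_one_iff_mul_self_le_one]
    calc p i * p i ≤ ∑ a, p a * p a :=
          Finset.single_le_sum (fun a _ => mul_self_nonneg (p a)) (Finset.mem_univ i)
      _ = 1 := hp.2
  have hKcomp : IsCompact K :=
    (isCompact_closedBall (0 : Fin α → ℝ) 1).of_isClosed_subset hKclosed hKsub
  have hscale : ∀ p ∈ U, p ≠ 0 → ((Real.sqrt (p ⬝ᵥ p))⁻¹ • p) ∈ K ∧
      ((Real.sqrt (p ⬝ᵥ p))⁻¹ • p) ⬝ᵥ (M *ᵥ ((Real.sqrt (p ⬝ᵥ p))⁻¹ • p))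
        = (p ⬝ᵥ (M *ᵥ p)) / (p ⬝ᵥ p) := by
    intro p hpU hp
    have ht : 0 < p ⬝ᵥ p := hdpos p hp
    set s := Real.sqrt (p ⬝ᵥ p) with hs
    have hss : s * s = p ⬝ᵥ p := Real.mul_self_sqrt ht.le
    have hspos : 0 < s := Real.sqrt_pos.mpr ht
    have hqq : (s⁻¹ • p) ⬝ᵥ (M *ᵥ (s⁻¹ • p)) = s⁻¹ * (s⁻¹ * (p ⬝ᵥ (M *ᵥ p))) := by
      rw [Matrix.mulVec_smul, smul_dotProduct, dotProduct_smul]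
      simp [smul_eq_mul, mul_assoc]
    have hdq : (s⁻¹ • p) ⬝ᵥ (s⁻¹ • p) = s⁻¹ * (s⁻¹ * (p ⬝ᵥ p)) := by
      rw [smul_dotProduct, dotProduct_smul]
      simp [smul_eq_mul, mul_assoc]
    have hinv : s⁻¹ * (s⁻¹ * (p ⬝ᵥ p)) = 1 := by
      field_simp
      rw [← hss]
      ring
    refine ⟨⟨U.smul_mem _ hpU, by rw [hdq, hinv]⟩, ?_⟩
    rw [hqq]
    rw [div_eq_mul_inv, ← hss, mul_inv]
    ring
  rcases Set.eq_empty_or_nonempty K with hKe | hne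
  · refine ⟨1, one_pos, fun p hpU => ?_⟩
    have hp0 : p = 0 := by
      by_contra hp
      have := (hscale p hpU hp).1
      rw [hKe] at this
      exact this
    subst hp0
    simp
  · obtain ⟨p₀, hp₀K, hmin⟩ := hKcomp.exists_isMinOn hne hfc.continuousOn
    have hlampos : 0 < p₀ ⬝ᵥ (M *ᵥ p₀) := by
      refine lt_of_le_of_ne (hnn p₀) fun h => ?_
      have hz : p₀ = 0 := hker p₀ hp₀K.1 h.symm
      have h1 : (0 : Fin α → ℝ) ⬝ᵥ (0 : Fin α → ℝ) = 1 := by rw [← hz]; exact hp₀K.2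
      simp at h1
    refine ⟨p₀ ⬝ᵥ (M *ᵥ p₀), hlampos, fun p hpU => ?_⟩
    rcases eq_or_ne p 0 with rfl | hp
    · simp
    · obtain ⟨hqK, hqval⟩ := hscale p hpU hp
      have hle := hmin hqK
      simp only [Set.mem_setOf_eq] at hle
      rw [hqval] at hle
      have ht := hdpos p hp
      calc (p₀ ⬝ᵥ (M *ᵥ p₀)) * (p ⬝ᵥ p) ≤ (p ⬝ᵥ (M *ᵥ p)) / (p ⬝ᵥ p) * (p ⬝ᵥ p) :=
            mul_le_mul_of_nonneg_right hle ht.le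
        _ = p ⬝ᵥ (M *ᵥ p) := by field_simp



/-- If `S_A` has nonempty interior, the convex cone `C_A` is closed in the space of linear
polynomials, identified with `ℝ × ℝⁿ` via coefficients `(a₀, a) ↦ a₀ + ∑ aᵢ xᵢ`. -/
theorem stmt_5 {n α : ℕ} (A0 : Matrix (Fin α) (Fin α) ℝ)
    (A : Fin n → Matrix (Fin α) (Fin α) ℝ) (hA0 : A0.IsSymm) (hA : ∀ i, (A i).IsSymm)
    (hint : (interior {x : Fin n → ℝ | (pencilEval A0 A x).PosSemidef}).Nonempty) :
    IsClosed {a : ℝ × (Fin n → ℝ) |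
      ∃ c ≥ (0:ℝ), ∃ (k : ℕ) (u : Fin k → Fin α → ℝ),
        a.1 = c + ∑ i, u i ⬝ᵥ (A0 *ᵥ u i) ∧
        ∀ j, a.2 j = ∑ i, u i ⬝ᵥ (A j *ᵥ u i)} := by
  classical
  obtain ⟨x₀, hx₀⟩ := hint
  obtain ⟨ε, hεpos, hball⟩ : ∃ ε > (0:ℝ), ∀ x, dist x x₀ < ε → (pencilEval A0 A x).PosSemidef := by
    have h1 : {x : Fin n → ℝ | (pencilEval A0 A x).PosSemidef} ∈ nhds x₀ :=
      mem_interior_iff_mem_nhds.mp hx₀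
    obtain ⟨ε, hε, hsub⟩ := Metric.mem_nhds_iff.mp h1
    exact ⟨ε, hε, fun x hx => hsub (Metric.mem_ball.mpr hx)⟩
  have hx₀S : (pencilEval A0 A x₀).PosSemidef := hball x₀ (by simpa using hεpos)
  set M₀ : Matrix (Fin α) (Fin α) ℝ := pencilEval A0 A x₀ with hM₀
  have hq : ∀ (x : Fin n → ℝ) (u : Fin α → ℝ), (pencilEval A0 A x).PosSemidef →
      0 ≤ u ⬝ᵥ (pencilEval A0 A x *ᵥ u) := fun x u hx => by simpa using hx.dotProduct_mulVec_nonneg u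
  have hnnM₀ : ∀ p : Fin α → ℝ, 0 ≤ p ⬝ᵥ (M₀ *ᵥ p) := fun p => hq x₀ p hx₀S
  -- pencil evaluation at perturbed points
  have hpeval : ∀ (j : Fin n) (t : ℝ),
      pencilEval A0 A (x₀ + Pi.single j t) = M₀ + t • A j := by
    intro j t
    rw [hM₀]
    unfold pencilEval
    have hsplit : ∀ i : Fin n, ((x₀ + Pi.single j t : Fin n → ℝ) i) • A i
        = x₀ i • A i + ((Pi.single j t : Fin n → ℝ) i) • A i :=
      fun i => by rw [Pi.add_apply, add_smul]
    rw [Finset.sum_congr rfl fun i _ => hsplit i, Finset.sum_add_distrib]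
    have hsingle : ∑ i, ((Pi.single j t : Fin n → ℝ) i) • A i = t • A j := by
      rw [Finset.sum_eq_single j]
      · rw [Pi.single_eq_same]
      · intro b _ hb; rw [Pi.single_eq_of_ne hb, zero_smul]
      · intro h; exact absurd (Finset.mem_univ j) h
    rw [hsingle]
    abel
  have hpert : ∀ (j : Fin n) (t : ℝ), |t| < ε → (M₀ + t • A j).PosSemidef := by
    intro j t ht
    rw [← hpeval j t]
    apply hball
    have hd : dist (x₀ + (Pi.single j t : Fin n → ℝ)) x₀ = ‖(Pi.single j t : Fin n → ℝ)‖ := by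
      rw [dist_eq_norm, add_sub_cancel_left]
    rw [hd, Pi.norm_single, Real.norm_eq_abs]
    exact ht
  -- the common kernel
  set W : Submodule ℝ (Fin α → ℝ) :=
    { carrier := {u | A0 *ᵥ u = 0 ∧ ∀ j, A j *ᵥ u = 0}
      add_mem' := fun ha hb => ⟨by rw [Matrix.mulVec_add, ha.1, hb.1, add_zero],
        fun j => by rw [Matrix.mulVec_add, ha.2 j, hb.2 j, add_zero]⟩
      zero_mem' := ⟨Matrix.mulVec_zero _, fun j => Matrix.mulVec_zero _⟩
      smul_mem' := fun c x hx => ⟨by rw [Matrix.mulVec_smul, hx.1, smul_zero],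
        fun j => by rw [Matrix.mulVec_smul, hx.2 j, smul_zero]⟩ } with hWdef
  have hWmem : ∀ u : Fin α → ℝ, u ∈ W ↔ (A0 *ᵥ u = 0 ∧ ∀ j, A j *ᵥ u = 0) := fun u => Iff.rfl
  -- kernel of M₀ is contained in W
  have hker : ∀ u : Fin α → ℝ, M₀ *ᵥ u = 0 → u ∈ W := by
    intro u hu
    have hqu : u ⬝ᵥ (M₀ *ᵥ u) = 0 := by rw [hu, dotProduct_zero]
    have hquad : ∀ (j : Fin n) (s : ℝ), u ⬝ᵥ ((M₀ + s • A j) *ᵥ u) = s * (u ⬝ᵥ (A j *ᵥ u)) := by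
      intro j s
      rw [Matrix.add_mulVec, hu, zero_add, Matrix.smul_mulVec, dotProduct_smul,
        smul_eq_mul]
    have hAj : ∀ j, A j *ᵥ u = 0 := by
      intro j
      have htpos : 0 < ε / 2 := half_pos hεpos
      have habs : |ε / 2| < ε := by rw [abs_of_pos htpos]; linarith
      have habs' : |(-(ε / 2))| < ε := by rw [abs_neg, abs_of_pos htpos]; linarith
      have hplus := hpert j (ε / 2) habs
      have hminus := hpert j (-(ε / 2)) habs'
      have h1 : 0 ≤ (ε / 2) * (u ⬝ᵥ (A j *ᵥ u)) := by
        rw [← hquad j (ε / 2)]; simpa using hplus.dotProduct_mulVec_nonneg u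
      have h2 : 0 ≤ (-(ε / 2)) * (u ⬝ᵥ (A j *ᵥ u)) := by
        rw [← hquad j (-(ε / 2))]; simpa using hminus.dotProduct_mulVec_nonneg u
      have hzero : u ⬝ᵥ (A j *ᵥ u) = 0 := by nlinarith
      have hquadzero : star u ⬝ᵥ ((M₀ + (ε / 2) • A j) *ᵥ u) = 0 := by
        rw [star_trivial, hquad j (ε / 2), hzero, mul_zero]
      have hMu := (hplus.dotProduct_mulVec_zero_iff u).mp hquadzero
      rw [Matrix.add_mulVec, hu, zero_add, Matrix.smul_mulVec] at hMu
      rcases smul_eq_zero.mp hMu with h | h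
      · exact absurd h (ne_of_gt htpos)
      · exact h
    refine ⟨?_, hAj⟩
    have hsum : M₀ *ᵥ u = A0 *ᵥ u + ∑ j, x₀ j • (A j *ᵥ u) := by
      rw [hM₀]
      unfold pencilEval
      rw [Matrix.add_mulVec, sum_mulVec_aux]
      congr 1
      exact Finset.sum_congr rfl fun j _ => Matrix.smul_mulVec (x₀ j) (A j) u
    rw [hu] at hsum
    have : (0 : Fin α → ℝ) = A0 *ᵥ u := by
      rw [hsum]
      simp [hAj]
    exact this.symm
  -- complement of W
  obtain ⟨U, hUW⟩ := Submodule.exists_isCompl W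
  have hdecomp : ∀ u : Fin α → ℝ,
      ∃ w ∈ W, u = ((U.linearProjOfIsCompl W hUW.symm u : Fin α → ℝ)) + w := by
    intro u
    refine ⟨(W.linearProjOfIsCompl U hUW u : Fin α → ℝ),
      (W.linearProjOfIsCompl U hUW u).2, ?_⟩
    have h := Submodule.projection_add_projection_eq_self hUW u
    rw [add_comm] at h
    exact h.symm
  -- coercivity on U
  have hkerU : ∀ p ∈ U, p ⬝ᵥ (M₀ *ᵥ p) = 0 → p = 0 := by
    intro p hpU hp0
    have hMp : M₀ *ᵥ p = 0 :=
      (hx₀S.dotProduct_mulVec_zero_iff p).mp (by rw [star_trivial]; exact hp0)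
    have hpW : p ∈ W := hker p hMp
    exact (Submodule.disjoint_def.mp hUW.disjoint) p hpW hpU
  obtain ⟨lam, hlam, hcoer⟩ := coercive_aux M₀ U hnnM₀ hkerU
  -- symmetry and W-annihilation facts
  have hM₀symm : M₀.IsSymm := by
    rw [hM₀]
    unfold pencilEval
    rw [Matrix.IsSymm, Matrix.transpose_add, hA0, Matrix.transpose_sum]
    congr 1
    exact Finset.sum_congr rfl fun i _ => by rw [Matrix.transpose_smul, hA i]
  have hM₀W : ∀ z ∈ W, M₀ *ᵥ z = 0 := by
    intro z hz
    rw [hM₀]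
    unfold pencilEval
    rw [Matrix.add_mulVec, hz.1, sum_mulVec_aux, zero_add]
    have : ∀ i : Fin n, (x₀ i • A i) *ᵥ z = 0 := fun i => by
      rw [Matrix.smul_mulVec, hz.2 i, smul_zero]
    rw [Finset.sum_congr rfl fun i _ => this i]
    simp
  -- the compression claim
  have key : ∀ b : ℝ × (Fin n → ℝ),
      (∃ c ≥ (0:ℝ), ∃ (k : ℕ) (u : Fin k → Fin α → ℝ),
        b.1 = c + ∑ i, u i ⬝ᵥ (A0 *ᵥ u i) ∧ ∀ j, b.2 j = ∑ i, u i ⬝ᵥ (A j *ᵥ u i)) →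
      ∃ c ≥ (0:ℝ), ∃ v : Fin α → Fin α → ℝ,
        b.1 = c + ∑ i, v i ⬝ᵥ (A0 *ᵥ v i) ∧ (∀ j, b.2 j = ∑ i, v i ⬝ᵥ (A j *ᵥ v i)) ∧
        lam * (∑ i, v i ⬝ᵥ v i) ≤ (b.1 - c) + ∑ j, x₀ j * b.2 j ∧
        0 ≤ (b.1 - c) + ∑ j, x₀ j * b.2 j := by
    rintro b ⟨c, hc, k, u, h1, h2⟩
    choose w hw hwe using fun i => hdecomp (u i)
    set p : Fin k → Fin α → ℝ := fun i => (U.linearProjOfIsCompl W hUW.symm (u i) : Fin α → ℝ)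
      with hp
    have hpU : ∀ i, p i ∈ U := fun i => (U.linearProjOfIsCompl W hUW.symm (u i)).2
    have hquadeq : ∀ (Mt : Matrix (Fin α) (Fin α) ℝ), Mt.IsSymm → (∀ z ∈ W, Mt *ᵥ z = 0) →
        ∀ i, u i ⬝ᵥ (Mt *ᵥ u i) = p i ⬝ᵥ (Mt *ᵥ p i) := by
      intro Mt hMt hMtW i
      calc u i ⬝ᵥ (Mt *ᵥ u i) = (p i + w i) ⬝ᵥ (Mt *ᵥ (p i + w i)) := by rw [← hwe i]
        _ = p i ⬝ᵥ (Mt *ᵥ p i) := quad_split_aux Mt hMt (p i) (w i) (hMtW _ (hw i))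
    -- the psd matrix P and its decomposition into α vectors
    set P : Matrix (Fin α) (Fin α) ℝ := ∑ i, vecMulVec (p i) (p i) with hPdef
    have hPpsd : P.PosSemidef := by
      rw [hPdef]
      have : ∀ s : Finset (Fin k), (∑ i ∈ s, vecMulVec (p i) (p i)).PosSemidef := by
        intro s
        induction s using Finset.induction_on with
        | empty => simpa using Matrix.PosSemidef.zero
        | insert _ _ hnotmem ih =>
          rw [Finset.sum_insert hnotmem]
          exact (vecMulVec_psd_aux _).add ih
      exact this Finset.univ
    obtain ⟨v, hv⟩ := psd_decomp_aux P hPpsd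
    have hsame : ∀ Mt : Matrix (Fin α) (Fin α) ℝ,
        ∑ i, p i ⬝ᵥ (Mt *ᵥ p i) = ∑ i, v i ⬝ᵥ (Mt *ᵥ v i) := by
      intro Mt
      rw [sum_quad_trace_aux Mt p, sum_quad_trace_aux Mt v, ← hv, ← hPdef]
    have htrv : ∑ i, v i ⬝ᵥ v i = ∑ i, p i ⬝ᵥ p i := by
      have e1 : Matrix.trace P = ∑ i, p i ⬝ᵥ p i := by
        rw [hPdef, Matrix.trace_sum]
        exact Finset.sum_congr rfl fun i _ => trace_vecMulVec_aux (p i)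
      have e2 : Matrix.trace P = ∑ i, v i ⬝ᵥ v i := by
        rw [hv, Matrix.trace_sum]
        exact Finset.sum_congr rfl fun i _ => trace_vecMulVec_aux (v i)
      rw [← e1, ← e2]
    -- the sums against A0 and A j agree
    have hA0eq : ∑ i, u i ⬝ᵥ (A0 *ᵥ u i) = ∑ i, v i ⬝ᵥ (A0 *ᵥ v i) := by
      rw [← hsame A0]
      exact Finset.sum_congr rfl fun i _ => hquadeq A0 hA0 (fun z hz => hz.1) i
    have hAjeq : ∀ j, ∑ i, u i ⬝ᵥ (A j *ᵥ u i) = ∑ i, v i ⬝ᵥ (A j *ᵥ v i) := by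
      intro j
      rw [← hsame (A j)]
      exact Finset.sum_congr rfl fun i _ => hquadeq (A j) (hA j) (fun z hz => hz.2 j) i
    -- expressing the M₀-sums
    have hM₀quad : ∀ (z : Fin k → Fin α → ℝ),
        ∑ i, z i ⬝ᵥ (M₀ *ᵥ z i)
          = (∑ i, z i ⬝ᵥ (A0 *ᵥ z i)) + ∑ j, x₀ j * (∑ i, z i ⬝ᵥ (A j *ᵥ z i)) := by
      intro z
      have hterm : ∀ i, z i ⬝ᵥ (M₀ *ᵥ z i)
          = z i ⬝ᵥ (A0 *ᵥ z i) + ∑ j, x₀ j * (z i ⬝ᵥ (A j *ᵥ z i)) := by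
        intro i
        rw [hM₀]
        exact quad_pencil_aux A0 A x₀ (z i)
      rw [Finset.sum_congr rfl fun i _ => hterm i, Finset.sum_add_distrib]
      congr 1
      rw [Finset.sum_comm]
      exact Finset.sum_congr rfl fun j _ => by rw [Finset.mul_sum]
    have hbval : ∑ i, u i ⬝ᵥ (M₀ *ᵥ u i) = (b.1 - c) + ∑ j, x₀ j * b.2 j := by
      rw [hM₀quad u, h1]
      have : ∀ j, x₀ j * (∑ i, u i ⬝ᵥ (A j *ᵥ u i)) = x₀ j * b.2 j := fun j => by rw [← h2 j]
      rw [Finset.sum_congr rfl fun j _ => this j]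
      ring
    have hbnn : 0 ≤ (b.1 - c) + ∑ j, x₀ j * b.2 j := by
      rw [← hbval]
      exact Finset.sum_nonneg fun i _ => hnnM₀ (u i)
    have hpsum : ∑ i, p i ⬝ᵥ (M₀ *ᵥ p i) = (b.1 - c) + ∑ j, x₀ j * b.2 j := by
      rw [← hbval]
      exact (Finset.sum_congr rfl fun i _ => (hquadeq M₀ hM₀symm hM₀W i).symm)
    have hbound : lam * (∑ i, v i ⬝ᵥ v i) ≤ (b.1 - c) + ∑ j, x₀ j * b.2 j := by
      rw [htrv, ← hpsum, Finset.mul_sum]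
      exact Finset.sum_le_sum fun i _ => hcoer (p i) (hpU i)
    exact ⟨c, hc, v, by rw [h1, hA0eq], fun j => by rw [h2 j, hAjeq j], hbound, hbnn⟩
  -- sequential closedness
  apply IsSeqClosed.isClosed
  intro a L ha hL
  choose c hc v h1 h2 h3 h4 using fun m => key (a m) (ha m)
  -- a bound for the linear functional along the sequence
  have hGtend : Filter.Tendsto (fun m => (a m).1 + ∑ j, x₀ j * (a m).2 j) Filter.atTop
      (nhds (L.1 + ∑ j, x₀ j * L.2 j)) := by
    apply Filter.Tendsto.add
    · exact (continuous_fst.tendsto L).comp hL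
    · apply tendsto_finset_sum
      intro j _
      exact Filter.Tendsto.const_mul _
        ((((continuous_apply j).comp continuous_snd).tendsto L).comp hL)
  obtain ⟨Mb, hMb⟩ : ∃ Mb : ℝ, ∀ m, (a m).1 + ∑ j, x₀ j * (a m).2 j ≤ Mb := by
    obtain ⟨Mb, hMb⟩ := hGtend.bddAbove_range
    exact ⟨Mb, fun m => hMb (Set.mem_range_self m)⟩
  have hcle : ∀ m, c m ≤ Mb := by
    intro m
    have := h4 m
    have := hMb m
    linarith
  have hMbnn : (0:ℝ) ≤ Mb := le_trans (hc 0) (hcle 0)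
  have hvb : ∀ m, ∑ i, v m i ⬝ᵥ v m i ≤ Mb / lam := by
    intro m
    have hle : lam * (∑ i, v m i ⬝ᵥ v m i) ≤ Mb := by
      have := h3 m
      have h5 := hMb m
      have h6 := hc m
      linarith
    rw [le_div_iff₀ hlam]
    linarith [hle]
  have hdsnn : ∀ (z : Fin α → ℝ), 0 ≤ z ⬝ᵥ z := fun z =>
    Finset.sum_nonneg fun i _ => mul_self_nonneg _
  have hventry : ∀ m i b', |v m i b'| ≤ Real.sqrt (Mb / lam) := by
    intro m i b'
    apply Real.abs_le_sqrt
    rw [pow_two]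
    calc v m i b' * v m i b' ≤ ∑ x, v m i x * v m i x :=
          Finset.single_le_sum (fun x _ => mul_self_nonneg (v m i x)) (Finset.mem_univ b')
      _ = v m i ⬝ᵥ v m i := rfl
      _ ≤ ∑ i', v m i' ⬝ᵥ v m i' :=
          Finset.single_le_sum (fun i' _ => hdsnn (v m i')) (Finset.mem_univ i)
      _ ≤ Mb / lam := hvb m
  -- Bolzano–Weierstrass
  set R : ℝ := max Mb (Real.sqrt (Mb / lam)) with hR
  have hzball : ∀ m, ((c m, v m) : ℝ × (Fin α → Fin α → ℝ)) ∈ Metric.closedBall 0 R := by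
    intro m
    rw [mem_closedBall_zero_iff, Prod.norm_def]
    apply max_le
    · rw [Real.norm_eq_abs, abs_of_nonneg (hc m)]
      exact le_trans (hcle m) (le_max_left _ _)
    · have hRnn : (0:ℝ) ≤ R := le_trans (Real.sqrt_nonneg _) (le_max_right _ _)
      refine (pi_norm_le_iff_of_nonneg hRnn).mpr fun i => ?_
      refine (pi_norm_le_iff_of_nonneg hRnn).mpr fun b' => ?_
      rw [Real.norm_eq_abs]
      exact le_trans (hventry m i b') (le_max_right _ _)
  obtain ⟨zlim, _, φ, hφmono, hφtend⟩ :=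
    tendsto_subseq_of_bounded Metric.isBounded_closedBall hzball
  have hLφ : Filter.Tendsto (a ∘ φ) Filter.atTop (nhds L) := hL.comp hφmono.tendsto_atTop
  have hctend : Filter.Tendsto (fun m => c (φ m)) Filter.atTop (nhds zlim.1) :=
    (continuous_fst.tendsto _).comp hφtend
  -- continuity of the quadratic maps
  have hcontQ : ∀ Mt : Matrix (Fin α) (Fin α) ℝ,
      Continuous fun z : Fin α → Fin α → ℝ => ∑ i, z i ⬝ᵥ (Mt *ᵥ z i) := by
    intro Mt
    have hrfl : (fun z : Fin α → Fin α → ℝ => ∑ i, z i ⬝ᵥ (Mt *ᵥ z i))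
        = fun z : Fin α → Fin α → ℝ => ∑ i, ∑ a, z i a * ∑ b', Mt a b' * z i b' := rfl
    rw [hrfl]
    refine continuous_finset_sum _ fun i _ => continuous_finset_sum _ fun a _ => ?_
    fun_prop
  constructor
  constructor
  · exact ge_of_tendsto' hctend fun m => hc (φ m)
  refine ⟨α, zlim.2, ?_, ?_⟩
  · -- first coordinate
    have ht1 : Filter.Tendsto (fun m => (a (φ m)).1) Filter.atTop (nhds L.1) :=
      (continuous_fst.tendsto L).comp hLφ
    have hFcont : Continuous fun z : ℝ × (Fin α → Fin α → ℝ) =>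
        z.1 + ∑ i, z.2 i ⬝ᵥ (A0 *ᵥ z.2 i) :=
      continuous_fst.add ((hcontQ A0).comp continuous_snd)
    have ht2 : Filter.Tendsto (fun m => (a (φ m)).1) Filter.atTop
        (nhds (zlim.1 + ∑ i, zlim.2 i ⬝ᵥ (A0 *ᵥ zlim.2 i))) := by
      have := (hFcont.tendsto zlim).comp hφtend
      refine this.congr fun m => ?_
      exact (h1 (φ m)).symm
    exact tendsto_nhds_unique ht1 ht2
  · -- remaining coordinates
    intro j
    have ht1 : Filter.Tendsto (fun m => (a (φ m)).2 j) Filter.atTop (nhds (L.2 j)) :=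
      (((continuous_apply j).comp continuous_snd).tendsto L).comp hLφ
    have hFcont : Continuous fun z : ℝ × (Fin α → Fin α → ℝ) =>
        ∑ i, z.2 i ⬝ᵥ (A j *ᵥ z.2 i) := (hcontQ (A j)).comp continuous_snd
    have ht2 : Filter.Tendsto (fun m => (a (φ m)).2 j) Filter.atTop
        (nhds (∑ i, zlim.2 i ⬝ᵥ (A j *ᵥ zlim.2 i))) := by
      have := (hFcont.tendsto zlim).comp hφtend
      refine this.congr fun m => ?_
      exact (h2 (φ m) j).symm
    exact tendsto_nhds_unique ht1 ht2
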